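/- Assume at most one index j has a_j = 0. Then there exist at most 2n + 4 affine lines L_1, …, L_N in ℝ² (N ≤ 2n + 4) whose union contains the amoeba: 𝒜 ⊆ L_1 ∪ ⋯ ∪ L_N. -/

import Mathlib

/-- `z_i = -b_i / a_i`, the root of the affine form `a_i λ + b_i`. -/
def zrt {N : ℕ} (a b : Fin N → ℚ) (i : Fin N) : ℚ := -(b i) / a i

/-- The piecewise-linear building block `g_{i,j}` of the tropical parametrization. -/
noncomputable def gfun (p : ℕ) {N : ℕ} (a b : Fin N → ℚ) (i j : Fin N) (r : ℝ) : ℝ :=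
  if a j ≠ 0 then
    if zrt a b j = zrt a b i then (padicValRat p (a j) : ℝ) + r
    else (padicValRat p (a j) : ℝ) + min r ((padicValRat p (zrt a b i - zrt a b j) : ℝ))
  else (padicValRat p (b j) : ℝ)

/-- The tropical parametrization `φ_i(r) = (Σ_j a_j g_{i,j}(r), Σ_j b_j g_{i,j}(r))`. -/
noncomputable def phiMap (p : ℕ) {N : ℕ} (a b : Fin N → ℚ) (i : Fin N) (r : ℝ) : ℝ × ℝ :=
  (∑ j, (a j : ℝ) * gfun p a b i j r, ∑ j, (b j : ℝ) * gfun p a b i j r)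

/-- The `p`-adic reduced discriminant amoeba `𝒜 = ⋃_{i : a_i ≠ 0} φ_i(ℝ)`. -/
def amoeba (p : ℕ) {N : ℕ} (a b : Fin N → ℚ) : Set (ℝ × ℝ) :=
  {y | ∃ i : Fin N, a i ≠ 0 ∧ ∃ r : ℝ, phiMap p a b i r = y}

noncomputable def vv (p : ℕ) (q : ℚ) : ℝ := (padicValRat p q : ℝ)

lemma vv_neg (p : ℕ) (q : ℚ) : vv p (-q) = vv p q := by
  simp [vv, padicValRat.neg]

lemma ballAdd {p : ℕ} (hp : p.Prime) {r : ℝ} {x y : ℚ}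
    (hx : x = 0 ∨ r < vv p x) (hy : y = 0 ∨ r < vv p y) :
    x + y = 0 ∨ r < vv p (x + y) := by
  haveI : Fact p.Prime := ⟨hp⟩
  rcases hx with rfl | hx
  · simpa using hy
  rcases hy with rfl | hy
  · simpa using Or.inr hx
  by_cases h0 : x + y = 0
  · exact Or.inl h0
  right
  have h := padicValRat.min_le_padicValRat_add (p := p) h0
  have h' : min (vv p x) (vv p y) ≤ vv p (x + y) := by
    simp only [vv]
    exact_mod_cast h
  exact lt_of_lt_of_le (lt_min hx hy) h'

lemma valAddEq {p : ℕ} (hp : p.Prime) {x y : ℚ} (hx : x ≠ 0) (hy : y ≠ 0)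
    (h : vv p x < vv p y) : x + y ≠ 0 ∧ vv p (x + y) = vv p x := by
  haveI : Fact p.Prime := ⟨hp⟩
  have hne : padicValRat p x ≠ padicValRat p y := by
    intro hc; rw [vv, vv, hc] at h; exact lt_irrefl _ h
  have h0 : x + y ≠ 0 := by
    intro hc
    have : y = -x := by linarith [hc]
    rw [this, padicValRat.neg] at hne; exact hne rfl
  refine ⟨h0, ?_⟩
  have := padicValRat.add_eq_min (p := p) h0 hx hy hne
  have hmin : min (padicValRat p x) (padicValRat p y) = padicValRat p x := by
    apply min_eq_left
    have : (padicValRat p x : ℝ) < (padicValRat p y : ℝ) := h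
    exact_mod_cast le_of_lt this
  rw [vv, vv, this, hmin]

open scoped Classical in
noncomputable def Zc {K : ℕ} (a : Fin K → ℚ) : Finset (Fin K) :=
  Finset.univ.filter (fun j => a j ≠ 0)

open scoped Classical in
noncomputable def ballS (p : ℕ) {K : ℕ} (a b : Fin K → ℚ) (i : Fin K) (r : ℝ) :
    Finset (Fin K) :=
  Finset.univ.filter (fun j => a j ≠ 0 ∧
    (zrt a b i - zrt a b j = 0 ∨ r < vv p (zrt a b i - zrt a b j)))

lemma mem_ballS {p K : ℕ} {a b : Fin K → ℚ} {i j : Fin K} {r : ℝ} :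
    j ∈ ballS p a b i r ↔ a j ≠ 0 ∧
      (zrt a b i - zrt a b j = 0 ∨ r < vv p (zrt a b i - zrt a b j)) := by
  simp [ballS]

lemma mem_Zc {K : ℕ} {a : Fin K → ℚ} {j : Fin K} : j ∈ Zc a ↔ a j ≠ 0 := by simp [Zc]

lemma ballS_subset_Zc {p K : ℕ} {a b : Fin K → ℚ} {i : Fin K} {r : ℝ} :
    ballS p a b i r ⊆ Zc a := by
  intro j hj; exact mem_Zc.2 (mem_ballS.1 hj).1

lemma self_mem_ballS {p K : ℕ} {a b : Fin K → ℚ} {i : Fin K} (hi : a i ≠ 0) (r : ℝ) :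
    i ∈ ballS p a b i r := mem_ballS.2 ⟨hi, Or.inl (sub_self _)⟩

noncomputable def dvec {K : ℕ} (a b : Fin K → ℚ) (S : Finset (Fin K)) : ℝ × ℝ :=
  (∑ j ∈ S, (a j : ℝ), ∑ j ∈ S, (b j : ℝ))

open scoped Classical in
noncomputable def xraw (p : ℕ) {K : ℕ} (a b : Fin K → ℚ) (i : Fin K) (r : ℝ) : ℝ × ℝ :=
  (∑ j ∈ Zc a, (a j : ℝ) * vv p (a j)
     + ∑ j ∈ Zc a \ ballS p a b i r, (a j : ℝ) * vv p (zrt a b i - zrt a b j),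
   ∑ j ∈ Zc a, (b j : ℝ) * vv p (a j)
     + ∑ j ∈ Finset.univ.filter (fun j => ¬ a j ≠ 0), (b j : ℝ) * vv p (b j)
     + ∑ j ∈ Zc a \ ballS p a b i r, (b j : ℝ) * vv p (zrt a b i - zrt a b j))

lemma coordSum (p : ℕ) {K : ℕ} (a b : Fin K → ℚ) (i : Fin K) (r : ℝ) (f : Fin K → ℚ) :
    ∑ j, (f j : ℝ) * gfun p a b i j r
      = (∑ j ∈ Zc a, (f j : ℝ) * vv p (a j)
          + ∑ j ∈ Finset.univ.filter (fun j => ¬ a j ≠ 0), (f j : ℝ) * vv p (b j)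
          + ∑ j ∈ Zc a \ ballS p a b i r, (f j : ℝ) * vv p (zrt a b i - zrt a b j))
        + r * ∑ j ∈ ballS p a b i r, (f j : ℝ) := by
  classical
  have hsplit := Finset.sum_filter_add_sum_filter_not Finset.univ (fun j => a j ≠ 0)
      (fun j => (f j : ℝ) * gfun p a b i j r)
  have hZ : (Finset.univ.filter (fun j => a j ≠ 0)) = Zc a := rfl
  have hsub : ballS p a b i r ⊆ Zc a := ballS_subset_Zc
  have hsd := Finset.sum_sdiff (f := fun j => (f j : ℝ) * gfun p a b i j r) hsub
  -- evaluate gfun on each piece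
  have h1 : ∀ j ∈ ballS p a b i r, (f j : ℝ) * gfun p a b i j r
      = (f j : ℝ) * vv p (a j) + (f j : ℝ) * r := by
    intro j hj
    obtain ⟨haj, hd⟩ := mem_ballS.1 hj
    rw [gfun, if_pos haj]
    by_cases hzz : zrt a b j = zrt a b i
    · rw [if_pos hzz]; simp [vv]; ring
    · rw [if_neg hzz]
      have hr : r < vv p (zrt a b i - zrt a b j) := by
        rcases hd with h | h
        · exact absurd (sub_eq_zero.1 h).symm hzz
        · exact h
      rw [show min r ((padicValRat p (zrt a b i - zrt a b j) : ℝ)) = r from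
        min_eq_left (le_of_lt hr)]
      simp [vv]; ring
  have h2 : ∀ j ∈ Zc a \ ballS p a b i r, (f j : ℝ) * gfun p a b i j r
      = (f j : ℝ) * vv p (a j) + (f j : ℝ) * vv p (zrt a b i - zrt a b j) := by
    intro j hj
    rw [Finset.mem_sdiff] at hj
    obtain ⟨hjZ, hjS⟩ := hj
    have haj : a j ≠ 0 := mem_Zc.1 hjZ
    have hnd : ¬ (zrt a b i - zrt a b j = 0 ∨ r < vv p (zrt a b i - zrt a b j)) := by
      intro hc; exact hjS (mem_ballS.2 ⟨haj, hc⟩)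
    push_neg at hnd
    rw [gfun, if_pos haj, if_neg (fun hc => hnd.1 (by rw [hc]; ring))]
    rw [show min r ((padicValRat p (zrt a b i - zrt a b j) : ℝ))
        = (padicValRat p (zrt a b i - zrt a b j) : ℝ) from min_eq_right (by exact_mod_cast hnd.2)]
    simp [vv]; ring
  have h3 : ∀ j ∈ Finset.univ.filter (fun j => ¬ a j ≠ 0),
      (f j : ℝ) * gfun p a b i j r = (f j : ℝ) * vv p (b j) := by
    intro j hj
    rw [Finset.mem_filter] at hj
    rw [gfun, if_neg hj.2]; rfl
  calc ∑ j, (f j : ℝ) * gfun p a b i j r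
      = ∑ j ∈ Zc a, (f j : ℝ) * gfun p a b i j r
        + ∑ j ∈ Finset.univ.filter (fun j => ¬ a j ≠ 0), (f j : ℝ) * gfun p a b i j r := by
        exact hsplit.symm
    _ = (∑ j ∈ Zc a \ ballS p a b i r, (f j : ℝ) * gfun p a b i j r
        + ∑ j ∈ ballS p a b i r, (f j : ℝ) * gfun p a b i j r)
        + ∑ j ∈ Finset.univ.filter (fun j => ¬ a j ≠ 0), (f j : ℝ) * vv p (b j) := by
        rw [hsd, Finset.sum_congr rfl h3]
    _ = (∑ j ∈ Zc a \ ballS p a b i r, ((f j : ℝ) * vv p (a j) + (f j : ℝ) * vv p (zrt a b i - zrt a b j))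
        + ∑ j ∈ ballS p a b i r, ((f j : ℝ) * vv p (a j) + (f j : ℝ) * r))
        + ∑ j ∈ Finset.univ.filter (fun j => ¬ a j ≠ 0), (f j : ℝ) * vv p (b j) := by
        rw [Finset.sum_congr rfl h1, Finset.sum_congr rfl h2]
    _ = _ := by
        rw [Finset.sum_add_distrib, Finset.sum_add_distrib]
        have hrec : ∑ j ∈ Zc a \ ballS p a b i r, (f j : ℝ) * vv p (a j)
            + ∑ j ∈ ballS p a b i r, (f j : ℝ) * vv p (a j)
            = ∑ j ∈ Zc a, (f j : ℝ) * vv p (a j) :=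
          Finset.sum_sdiff hsub
        have hmr : ∑ j ∈ ballS p a b i r, (f j : ℝ) * r
            = r * ∑ j ∈ ballS p a b i r, (f j : ℝ) := by
          rw [Finset.mul_sum]; apply Finset.sum_congr rfl; intros; ring
        rw [hmr, ← hrec]; ring

lemma phi_eq (p : ℕ) {K : ℕ} (a b : Fin K → ℚ) (i : Fin K) (r : ℝ) :
    phiMap p a b i r = xraw p a b i r + r • dvec a b (ballS p a b i r) := by
  have h1 := coordSum p a b i r a
  have h2 := coordSum p a b i r b
  have ha0 : ∑ j ∈ Finset.univ.filter (fun j => ¬ a j ≠ 0), (a j : ℝ) * vv p (b j) = 0 := by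
    apply Finset.sum_eq_zero
    intro j hj
    rw [Finset.mem_filter] at hj
    have : a j = 0 := by tauto
    rw [this]; simp
  rw [phiMap, xraw, dvec]
  simp only [Prod.mk_add_mk, Prod.smul_mk, smul_eq_mul, Prod.mk.injEq]
  constructor
  · linarith [h1, ha0]
  · linarith [h2]

lemma val_eq_of_mem {p : ℕ} (hp : p.Prime) {K : ℕ} {a b : Fin K → ℚ} {i i' j : Fin K}
    {r : ℝ} (hii' : i' ∈ ballS p a b i r) (hj : j ∉ ballS p a b i r) (hja : a j ≠ 0) :
    zrt a b i' - zrt a b j ≠ 0 ∧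
      vv p (zrt a b i' - zrt a b j) = vv p (zrt a b i - zrt a b j) := by
  have hnd : ¬ (zrt a b i - zrt a b j = 0 ∨ r < vv p (zrt a b i - zrt a b j)) := by
    intro hc; exact hj (mem_ballS.2 ⟨hja, hc⟩)
  push_neg at hnd
  by_cases hzz : zrt a b i - zrt a b i' = 0
  · have : zrt a b i' = zrt a b i := by linarith [hzz]
    rw [this]; exact ⟨hnd.1, rfl⟩
  · have hii'' := (mem_ballS.1 hii').2
    have hlt : r < vv p (zrt a b i - zrt a b i') := by
      rcases hii'' with h | h
      · exact absurd h hzz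
      · exact h
    have hkey := valAddEq hp hnd.1 (neg_ne_zero.2 hzz)
      (by rw [vv_neg]; exact lt_of_le_of_lt hnd.2 hlt)
    have heq : zrt a b i - zrt a b j + -(zrt a b i - zrt a b i') = zrt a b i' - zrt a b j := by
      ring
    rw [heq] at hkey
    exact hkey

lemma xraw_eq {p : ℕ} (hp : p.Prime) {K : ℕ} {a b : Fin K → ℚ} {i i' : Fin K}
    {r r' : ℝ} (hi' : a i' ≠ 0)
    (h : ballS p a b i r = ballS p a b i' r') : xraw p a b i r = xraw p a b i' r' := by
  have hmem : i' ∈ ballS p a b i r := by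
    rw [h]; exact self_mem_ballS hi' r'
  have hterm : ∀ j ∈ Zc a \ ballS p a b i r,
      vv p (zrt a b i - zrt a b j) = vv p (zrt a b i' - zrt a b j) := by
    intro j hj
    rw [Finset.mem_sdiff] at hj
    exact ((val_eq_of_mem hp hmem hj.2 (mem_Zc.1 hj.1)).2).symm
  rw [xraw, xraw, h]
  have hsa : ∑ j ∈ Zc a \ ballS p a b i' r', (a j : ℝ) * vv p (zrt a b i - zrt a b j)
      = ∑ j ∈ Zc a \ ballS p a b i' r', (a j : ℝ) * vv p (zrt a b i' - zrt a b j) := by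
    apply Finset.sum_congr rfl; intro j hj; rw [← h] at hj; rw [hterm j hj]
  have hsb : ∑ j ∈ Zc a \ ballS p a b i' r', (b j : ℝ) * vv p (zrt a b i - zrt a b j)
      = ∑ j ∈ Zc a \ ballS p a b i' r', (b j : ℝ) * vv p (zrt a b i' - zrt a b j) := by
    apply Finset.sum_congr rfl; intro j hj; rw [← h] at hj; rw [hterm j hj]
  rw [hsa, hsb]

lemma ball_weaken {p : ℕ} {r r' : ℝ} (hrr : r ≤ r') {x : ℚ}
    (h : x = 0 ∨ r' < vv p x) : x = 0 ∨ r < vv p x := by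
  rcases h with h | h
  · exact Or.inl h
  · exact Or.inr (lt_of_le_of_lt hrr h)

lemma ball_neg {p : ℕ} {r : ℝ} {x : ℚ} (h : x = 0 ∨ r < vv p x) :
    -x = 0 ∨ r < vv p (-x) := by
  rw [vv_neg, neg_eq_zero]; exact h

lemma ball_nested {p : ℕ} (hp : p.Prime) {K : ℕ} {a b : Fin K → ℚ} {i i' : Fin K}
    {r r' : ℝ} (hrr : r ≤ r')
    (hnd : ¬ Disjoint (ballS p a b i r) (ballS p a b i' r')) :
    ballS p a b i' r' ⊆ ballS p a b i r := by
  obtain ⟨k, hk1, hk2⟩ := Finset.not_disjoint_iff.1 hnd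
  intro j hj
  obtain ⟨hja, hjd⟩ := mem_ballS.1 hj
  refine mem_ballS.2 ⟨hja, ?_⟩
  have e1 : zrt a b i - zrt a b k = 0 ∨ r < vv p (zrt a b i - zrt a b k) :=
    (mem_ballS.1 hk1).2
  have e2 : -(zrt a b i' - zrt a b k) = 0 ∨ r < vv p (-(zrt a b i' - zrt a b k)) :=
    ball_neg (ball_weaken hrr (mem_ballS.1 hk2).2)
  have e3 : zrt a b i' - zrt a b j = 0 ∨ r < vv p (zrt a b i' - zrt a b j) :=
    ball_weaken hrr hjd
  have := ballAdd hp (ballAdd hp e1 e2) e3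
  have heq : zrt a b i - zrt a b k + -(zrt a b i' - zrt a b k) + (zrt a b i' - zrt a b j)
      = zrt a b i - zrt a b j := by ring
  rwa [heq] at this

lemma ball_laminar {p : ℕ} (hp : p.Prime) {K : ℕ} {a b : Fin K → ℚ} {i i' : Fin K}
    {r r' : ℝ} :
    ballS p a b i r ⊆ ballS p a b i' r' ∨ ballS p a b i' r' ⊆ ballS p a b i r ∨
      Disjoint (ballS p a b i r) (ballS p a b i' r') := by
  by_cases hd : Disjoint (ballS p a b i r) (ballS p a b i' r')
  · exact Or.inr (Or.inr hd)
  rcases le_total r r' with h | h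
  · exact Or.inr (Or.inl (ball_nested hp h hd))
  · exact Or.inl (ball_nested hp h (fun hc => hd hc.symm))

lemma ball_closed {p : ℕ} {K : ℕ} {a b : Fin K → ℚ} {i : Fin K} {r : ℝ} {j k : Fin K}
    (hj : j ∈ ballS p a b i r) (hk : a k ≠ 0) (hzz : zrt a b k = zrt a b j) :
    k ∈ ballS p a b i r := by
  obtain ⟨_, hjd⟩ := mem_ballS.1 hj
  exact mem_ballS.2 ⟨hk, by rw [hzz]; exact hjd⟩

open scoped Classical in
noncomputable def x0 (p : ℕ) {K : ℕ} (a b : Fin K → ℚ) (S : Finset (Fin K)) : ℝ × ℝ :=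
  if h : ∃ i, a i ≠ 0 ∧ ∃ r : ℝ, S = ballS p a b i r then
    xraw p a b h.choose h.choose_spec.2.choose
  else 0

noncomputable def vdir {K : ℕ} (a b : Fin K → ℚ) (S : Finset (Fin K)) : ℝ × ℝ :=
  if dvec a b S = 0 then (1, 0) else dvec a b S

lemma vdir_ne_zero {K : ℕ} (a b : Fin K → ℚ) (S : Finset (Fin K)) :
    vdir a b S ≠ 0 := by
  rw [vdir]
  split
  · intro hc
    have : (1 : ℝ) = 0 := congrArg Prod.fst hc
    norm_num at this
  · assumption

noncomputable def Lset (p : ℕ) {K : ℕ} (a b : Fin K → ℚ) (S : Finset (Fin K)) :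
    Set (ℝ × ℝ) :=
  {y | ∃ t : ℝ, y = x0 p a b S + t • vdir a b S}

lemma x0_ball {p : ℕ} (hp : p.Prime) {K : ℕ} {a b : Fin K → ℚ} {i : Fin K}
    (hi : a i ≠ 0) (r : ℝ) : x0 p a b (ballS p a b i r) = xraw p a b i r := by
  have h : ∃ i', a i' ≠ 0 ∧ ∃ r' : ℝ, ballS p a b i r = ballS p a b i' r' :=
    ⟨i, hi, r, rfl⟩
  rw [x0, dif_pos h]
  exact (xraw_eq hp h.choose_spec.1 h.choose_spec.2.choose_spec).symm

lemma phi_mem_Lset {p : ℕ} (hp : p.Prime) {K : ℕ} {a b : Fin K → ℚ} {i : Fin K}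
    (hi : a i ≠ 0) (r : ℝ) : phiMap p a b i r ∈ Lset p a b (ballS p a b i r) := by
  rw [phi_eq p a b i r]
  by_cases hd : dvec a b (ballS p a b i r) = 0
  · refine ⟨0, ?_⟩
    rw [x0_ball hp hi r, hd, smul_zero, zero_smul, add_zero]
  · refine ⟨r, ?_⟩
    rw [x0_ball hp hi r, vdir, if_neg hd]

lemma phi_const {p : ℕ} {K : ℕ} {a b : Fin K → ℚ} (hall : ∀ j, a j ≠ 0)
    (ha : ∑ j, a j = 0) (hb : ∑ j, b j = 0) {i : Fin K} {s : ℝ}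
    (h : ∀ j, zrt a b j = zrt a b i ∨ s ≤ vv p (zrt a b i - zrt a b j)) :
    phiMap p a b i s = (∑ j, (a j : ℝ) * vv p (a j), ∑ j, (b j : ℝ) * vv p (a j)) := by
  have hg : ∀ j, gfun p a b i j s = vv p (a j) + s := by
    intro j
    rw [gfun, if_pos (hall j)]
    rcases h j with hz | hz
    · rw [if_pos hz]; rfl
    · by_cases hzz : zrt a b j = zrt a b i
      · rw [if_pos hzz]; rfl
      · rw [if_neg hzz, min_eq_left (by exact_mod_cast hz)]; rfl
  have haR : ∑ j, (a j : ℝ) = 0 := by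
    have : ((∑ j, a j : ℚ) : ℝ) = 0 := by rw [ha]; simp
    rwa [Rat.cast_sum] at this
  have hbR : ∑ j, (b j : ℝ) = 0 := by
    have : ((∑ j, b j : ℚ) : ℝ) = 0 := by rw [hb]; simp
    rwa [Rat.cast_sum] at this
  rw [phiMap]
  have hA : ∑ j, (a j : ℝ) * gfun p a b i j s = ∑ j, (a j : ℝ) * vv p (a j) := by
    calc ∑ j, (a j : ℝ) * gfun p a b i j s
        = ∑ j, ((a j : ℝ) * vv p (a j) + (a j : ℝ) * s) := by
          apply Finset.sum_congr rfl; intro j _; rw [hg j]; ring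
      _ = ∑ j, (a j : ℝ) * vv p (a j) + (∑ j, (a j : ℝ)) * s := by
          rw [Finset.sum_add_distrib, Finset.sum_mul]
      _ = _ := by rw [haR]; ring
  have hB : ∑ j, (b j : ℝ) * gfun p a b i j s = ∑ j, (b j : ℝ) * vv p (a j) := by
    calc ∑ j, (b j : ℝ) * gfun p a b i j s
        = ∑ j, ((b j : ℝ) * vv p (a j) + (b j : ℝ) * s) := by
          apply Finset.sum_congr rfl; intro j _; rw [hg j]; ring
      _ = ∑ j, (b j : ℝ) * vv p (a j) + (∑ j, (b j : ℝ)) * s := by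
          rw [Finset.sum_add_distrib, Finset.sum_mul]
      _ = _ := by rw [hbR]; ring
  rw [hA, hB]

open scoped Classical in
noncomputable def F0 (p : ℕ) {K : ℕ} (a b : Fin K → ℚ) : Finset (Finset (Fin K)) :=
  (Zc a).powerset.filter (fun S => ∃ i, a i ≠ 0 ∧ ∃ r : ℝ, S = ballS p a b i r)

lemma mem_F0 {p K : ℕ} {a b : Fin K → ℚ} {S : Finset (Fin K)} :
    S ∈ F0 p a b ↔ S ⊆ Zc a ∧ ∃ i, a i ≠ 0 ∧ ∃ r : ℝ, S = ballS p a b i r := by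
  simp [F0, Finset.mem_filter, Finset.mem_powerset]

lemma ball_mem_F0 {p K : ℕ} {a b : Fin K → ℚ} {i : Fin K} (hi : a i ≠ 0) (r : ℝ) :
    ballS p a b i r ∈ F0 p a b :=
  mem_F0.2 ⟨ballS_subset_Zc, i, hi, r, rfl⟩

lemma F0_nonempty {p K : ℕ} {a b : Fin K → ℚ} {S : Finset (Fin K)} (hS : S ∈ F0 p a b) :
    S.Nonempty := by
  obtain ⟨-, i, hi, r, rfl⟩ := mem_F0.1 hS
  exact ⟨i, self_mem_ballS hi r⟩

lemma F0_closed {p K : ℕ} {a b : Fin K → ℚ} {S : Finset (Fin K)} (hS : S ∈ F0 p a b)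
    {j k : Fin K} (hj : j ∈ S) (hk : a k ≠ 0) (hzz : zrt a b k = zrt a b j) : k ∈ S := by
  obtain ⟨-, i, hi, r, rfl⟩ := mem_F0.1 hS
  exact ball_closed hj hk hzz

lemma F0_laminar {p : ℕ} (hp : p.Prime) {K : ℕ} {a b : Fin K → ℚ}
    {S T : Finset (Fin K)} (hS : S ∈ F0 p a b) (hT : T ∈ F0 p a b) :
    S ⊆ T ∨ T ⊆ S ∨ Disjoint S T := by
  obtain ⟨-, i, hi, r, rfl⟩ := mem_F0.1 hS
  obtain ⟨-, i', hi', r', rfl⟩ := mem_F0.1 hT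
  exact ball_laminar hp

lemma subset_of_img_subset {p K : ℕ} {a b : Fin K → ℚ} {S T : Finset (Fin K)}
    (hS : S ⊆ Zc a) (hT : ∀ j ∈ T, ∀ k, a k ≠ 0 → zrt a b k = zrt a b j → k ∈ T)
    (h : S.image (zrt a b) ⊆ T.image (zrt a b)) : S ⊆ T := by
  intro j hj
  have : zrt a b j ∈ T.image (zrt a b) := h (Finset.mem_image_of_mem _ hj)
  obtain ⟨k, hkT, hk⟩ := Finset.mem_image.1 this
  exact hT k hkT j (mem_Zc.1 (hS hj)) hk.symm

lemma disjoint_img {p K : ℕ} {a b : Fin K → ℚ} {S T : Finset (Fin K)}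
    (hS : S ⊆ Zc a) (hT : ∀ j ∈ T, ∀ k, a k ≠ 0 → zrt a b k = zrt a b j → k ∈ T)
    (h : Disjoint S T) : Disjoint (S.image (zrt a b)) (T.image (zrt a b)) := by
  rw [Finset.disjoint_left]
  intro q hqS hqT
  obtain ⟨j, hjS, hj⟩ := Finset.mem_image.1 hqS
  obtain ⟨k, hkT, hk⟩ := Finset.mem_image.1 hqT
  have : j ∈ T := hT k hkT j (mem_Zc.1 (hS hjS)) (by rw [hj, hk])
  exact (Finset.disjoint_left.1 h) hjS this

lemma F0_img_injOn {p : ℕ} {K : ℕ} {a b : Fin K → ℚ} {F : Finset (Finset (Fin K))}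
    (hF : F ⊆ F0 p a b) :
    Set.InjOn (fun S : Finset (Fin K) => S.image (zrt a b)) ↑F := by
  intro S hS T hT h
  have hS' := hF hS
  have hT' := hF hT
  apply Finset.Subset.antisymm
  · exact subset_of_img_subset (p := p) (mem_F0.1 hS').1 (fun j hj k hk hzz => F0_closed hT' hj hk hzz)
      (le_of_eq h)
  · exact subset_of_img_subset (p := p) (mem_F0.1 hT').1 (fun j hj k hk hzz => F0_closed hS' hj hk hzz)
      (le_of_eq h.symm)

lemma glue {α : Type} (F : Finset α) (Lf : α → Set (ℝ × ℝ)) (A : Set (ℝ × ℝ))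
    (hl : ∀ S, ∃ x v : ℝ × ℝ, v ≠ 0 ∧ Lf S = {y | ∃ t : ℝ, y = x + t • v})
    (hc : ∀ y ∈ A, ∃ S ∈ F, y ∈ Lf S) (m : ℕ) (hm : F.card ≤ m) :
    ∃ (N : ℕ) (L : Fin N → Set (ℝ × ℝ)), N ≤ m ∧
      (∀ k : Fin N, ∃ x₀ v : ℝ × ℝ, v ≠ 0 ∧ L k = {y | ∃ t : ℝ, y = x₀ + t • v}) ∧
      A ⊆ ⋃ k : Fin N, L k := by
  refine ⟨F.card, fun k => Lf (F.toList.get (Fin.cast F.length_toList.symm k)), hm,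
    fun k => hl _, ?_⟩
  intro y hy
  obtain ⟨S, hSF, hyS⟩ := hc y hy
  obtain ⟨k, hk⟩ := List.mem_iff_get.1 (Finset.mem_toList.2 hSF)
  refine Set.mem_iUnion.2 ⟨Fin.cast F.length_toList k, ?_⟩
  have hcast : Fin.cast F.length_toList.symm (Fin.cast F.length_toList k) = k := by
    simp [Fin.ext_iff]
  rw [hcast, hk]
  exact hyS
open Finset

lemma laminarB {α : Type*} [DecidableEq α] (U : Finset α) :
    ∀ (F : Finset (Finset α)),
    (∀ S ∈ F, S.Nonempty) → (∀ S ∈ F, S ⊆ U) →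
    (∀ S ∈ F, ∀ T ∈ F, S ⊆ T ∨ T ⊆ S ∨ Disjoint S T) →
    U ∉ F → F.card ≤ 2 * U.card - 2 := by
  induction U using Finset.strongInduction with
  | _ U IH =>
  intro F hne hsub hlam hU
  rcases F.eq_empty_or_nonempty with rfl | hFne
  · simp
  obtain ⟨M, hMF, hMmax⟩ := F.exists_maximal hFne
  have hMU : M ⊂ U := lt_of_le_of_ne (hsub M hMF) (by rintro rfl; exact hU hMF)
  have hMne : M.Nonempty := hne M hMF
  set F₁ : Finset (Finset α) := F.filter (· ⊆ M) with hF₁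
  set F₂ : Finset (Finset α) := F.filter (¬ · ⊆ M) with hF₂
  have hsplit : F₁.card + F₂.card = F.card := F.card_filter_add_card_filter_not _
  -- F₂ sets are ⊆ U \ M
  have hF₂sub : ∀ S ∈ F₂, S ⊆ U \ M := by
    intro S hS
    rw [hF₂, mem_filter] at hS
    obtain ⟨hSF, hSM⟩ := hS
    have hdisj : Disjoint S M := by
      rcases hlam S hSF M hMF with h | h | h
      · exact absurd h hSM
      · rcases eq_or_ssubset_of_subset h with h' | h'
        · exact absurd (le_of_eq h'.symm : S ⊆ M) hSM
        · exact absurd (hMmax hSF h'.le) hSM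
      · exact h
    exact subset_sdiff.2 ⟨hsub S hSF, hdisj⟩
  -- bound F₁ via IH on M
  have h1 : (F₁.erase M).card ≤ 2 * M.card - 2 := by
    apply IH M hMU
    · intro S hS; exact hne S (mem_filter.1 (mem_of_mem_erase hS)).1
    · intro S hS; exact (mem_filter.1 (mem_of_mem_erase hS)).2
    · intro S hS T hT
      exact hlam S (mem_filter.1 (mem_of_mem_erase hS)).1 T (mem_filter.1 (mem_of_mem_erase hT)).1
    · exact notMem_erase _ _
  have h1' : F₁.card ≤ (F₁.erase M).card + 1 := by
    have := card_le_card (subset_insert_iff.2 (Finset.Subset.refl (F₁.erase M)))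
    have h2 := card_insert_le M (F₁.erase M)
    omega
  -- bound F₂ via IH on U \ M
  have hUM : U \ M ⊂ U := by
    apply sdiff_ssubset (le_of_lt hMU) hMne
  have h2 : (F₂.erase (U \ M)).card ≤ 2 * (U \ M).card - 2 := by
    apply IH (U \ M) hUM
    · intro S hS; exact hne S (mem_filter.1 (mem_of_mem_erase hS)).1
    · intro S hS; exact hF₂sub S (mem_of_mem_erase hS)
    · intro S hS T hT
      exact hlam S (mem_filter.1 (mem_of_mem_erase hS)).1 T (mem_filter.1 (mem_of_mem_erase hT)).1
    · exact notMem_erase _ _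
  have h2' : F₂.card ≤ (F₂.erase (U \ M)).card + 1 := by
    have := card_le_card (subset_insert_iff.2 (Finset.Subset.refl (F₂.erase (U \ M))))
    have h3 := card_insert_le (U \ M) (F₂.erase (U \ M))
    omega
  have hcard : (U \ M).card = U.card - M.card := card_sdiff_of_subset (le_of_lt hMU)
  have hM1 : 1 ≤ M.card := card_pos.2 hMne
  have hMlt : M.card < U.card := card_lt_card hMU
  have hUMne : 1 ≤ (U \ M).card := by
    rw [hcard]; omega
  omega

lemma F0_img_bound {p : ℕ} (hp : p.Prime) {K : ℕ} {a b : Fin K → ℚ}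
    {F : Finset (Finset (Fin K))} (hF : F ⊆ F0 p a b)
    (hnotin : (Zc a).image (zrt a b) ∉
      F.image (fun S : Finset (Fin K) => S.image (zrt a b))) :
    F.card ≤ 2 * ((Zc a).image (zrt a b)).card - 2 := by
  classical
  have hinj := F0_img_injOn (p := p) (a := a) (b := b) hF
  have hcard : (F.image (fun S : Finset (Fin K) => S.image (zrt a b))).card = F.card :=
    Finset.card_image_of_injOn hinj
  rw [← hcard]
  apply laminarB ((Zc a).image (zrt a b))
  · intro S hS
    obtain ⟨T, hT, rfl⟩ := Finset.mem_image.1 hS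
    exact (F0_nonempty (hF hT)).image _
  · intro S hS
    obtain ⟨T, hT, rfl⟩ := Finset.mem_image.1 hS
    exact Finset.image_subset_image (mem_F0.1 (hF hT)).1
  · intro S hS T hT
    obtain ⟨S', hS', rfl⟩ := Finset.mem_image.1 hS
    obtain ⟨T', hT', rfl⟩ := Finset.mem_image.1 hT
    rcases F0_laminar hp (hF hS') (hF hT') with h | h | h
    · exact Or.inl (Finset.image_subset_image h)
    · exact Or.inr (Or.inl (Finset.image_subset_image h))
    · exact Or.inr (Or.inr (disjoint_img (p := p) (mem_F0.1 (hF hS')).1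
        (fun j hj k hk hzz => F0_closed (hF hT') hj hk hzz) h))
  · exact hnotin

lemma F0_img_bound' {p : ℕ} (hp : p.Prime) {K : ℕ} {a b : Fin K → ℚ}
    {F : Finset (Finset (Fin K))} (hF : F ⊆ F0 p a b) :
    F.card ≤ 2 * ((Zc a).image (zrt a b)).card - 1 := by
  classical
  set U := (Zc a).image (zrt a b) with hU
  set F1 := F.filter (fun S : Finset (Fin K) => S.image (zrt a b) = U) with hF1
  set F2 := F \ F1 with hF2
  have hun : F1 ∪ F2 = F := Finset.union_sdiff_of_subset (Finset.filter_subset _ _)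
  have hle : F.card ≤ F1.card + F2.card := by
    rw [← hun]; exact Finset.card_union_le _ _
  have h2 : F2.card ≤ 2 * U.card - 2 := by
    apply F0_img_bound hp (le_trans (Finset.sdiff_subset) hF)
    intro hc
    obtain ⟨S, hSF, hQ⟩ := Finset.mem_image.1 hc
    have hSF' := Finset.mem_sdiff.1 hSF
    exact hSF'.2 (Finset.mem_filter.2 ⟨hSF'.1, hQ⟩)
  have h1 : F1.card ≤ 1 := by
    apply Finset.card_le_one.2
    intro S hS T hT
    have hS' := Finset.mem_filter.1 hS
    have hT' := Finset.mem_filter.1 hT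
    exact F0_img_injOn (p := p) (a := a) (b := b) hF (Finset.mem_coe.2 hS'.1)
      (Finset.mem_coe.2 hT'.1) (hS'.2.trans hT'.2.symm)
  rcases F.eq_empty_or_nonempty with rfl | ⟨S, hSF⟩
  · simp
  have hUne : 1 ≤ U.card := by
    obtain ⟨j, hj⟩ := F0_nonempty (hF hSF)
    have hjZ : j ∈ Zc a := (mem_F0.1 (hF hSF)).1 hj
    exact Finset.card_pos.2 ⟨zrt a b j, Finset.mem_image_of_mem _ hjZ⟩
  omega

lemma cover_univ_case {p : ℕ} (hp : p.Prime) {K : ℕ} {a b : Fin K → ℚ}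
    (hall : ∀ j, a j ≠ 0) (ha : ∑ j, a j = 0) (hb : ∑ j, b j = 0)
    {i : Fin K} (hi : a i ≠ 0) (r : ℝ)
    (hex : ∃ j2, zrt a b j2 ≠ zrt a b i) (hSZ : ballS p a b i r = Zc a) :
    ∃ S ∈ (F0 p a b).erase (Zc a), phiMap p a b i r ∈ Lset p a b S := by
  classical
  obtain ⟨j2, hj2⟩ := hex
  have hsne : (Finset.univ.filter (fun j => zrt a b j ≠ zrt a b i)).Nonempty :=
    ⟨j2, Finset.mem_filter.2 ⟨Finset.mem_univ _, hj2⟩⟩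
  obtain ⟨jm, hjm, hjmin⟩ := Finset.exists_min_image
    (Finset.univ.filter (fun j => zrt a b j ≠ zrt a b i))
    (fun j => vv p (zrt a b i - zrt a b j)) hsne
  have hjmz : zrt a b jm ≠ zrt a b i := (Finset.mem_filter.1 hjm).2
  set r1 : ℝ := vv p (zrt a b i - zrt a b jm) with hr1
  have hle : ∀ j, zrt a b j = zrt a b i ∨ r1 ≤ vv p (zrt a b i - zrt a b j) := by
    intro j
    by_cases hc : zrt a b j = zrt a b i
    · exact Or.inl hc
    · exact Or.inr (hjmin j (Finset.mem_filter.2 ⟨Finset.mem_univ _, hc⟩))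
  have hr : ∀ j, zrt a b j = zrt a b i ∨ r ≤ vv p (zrt a b i - zrt a b j) := by
    intro j
    have hjZ : j ∈ Zc a := mem_Zc.2 (hall j)
    rw [← hSZ] at hjZ
    rcases (mem_ballS.1 hjZ).2 with h | h
    · exact Or.inl (sub_eq_zero.1 h).symm
    · exact Or.inr (le_of_lt h)
  have hphi : phiMap p a b i r = phiMap p a b i r1 := by
    rw [phi_const (p := p) hall ha hb hr, phi_const (p := p) hall ha hb hle]
  have hne2 : ballS p a b i r1 ≠ Zc a := by
    intro hc
    have hjb : jm ∈ ballS p a b i r1 := by rw [hc]; exact mem_Zc.2 (hall jm)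
    rcases (mem_ballS.1 hjb).2 with h | h
    · exact hjmz (sub_eq_zero.1 h).symm
    · exact lt_irrefl _ h
  refine ⟨ballS p a b i r1, Finset.mem_erase.2 ⟨hne2, ball_mem_F0 hi r1⟩, ?_⟩
  rw [hphi]
  exact phi_mem_Lset hp hi r1


theorem stmt6 (p n : ℕ) (hp : p.Prime) (hn : 1 ≤ n)
    (a b : Fin (n + 3) → ℚ)
    (ha : ∑ j, a j = 0) (hb : ∑ j, b j = 0)
    (hab : ∀ j, (a j, b j) ≠ ((0 : ℚ), (0 : ℚ)))
    (h0 : ∀ j k, a j = 0 → a k = 0 → j = k) :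
    ∃ (N : ℕ) (L : Fin N → Set (ℝ × ℝ)), N ≤ 2 * n + 4 ∧
      (∀ k : Fin N, ∃ x₀ v : ℝ × ℝ, v ≠ 0 ∧ L k = {y | ∃ t : ℝ, y = x₀ + t • v}) ∧
      amoeba p a b ⊆ ⋃ k : Fin N, L k := by
  classical
  by_cases hz0 : ∃ j0, a j0 = 0
  · -- Branch 1 : some coefficient vanishes
    obtain ⟨j0, hj0⟩ := hz0
    have hZsub : Zc a ⊆ Finset.univ.erase j0 := by
      intro k hk
      exact Finset.mem_erase.2 ⟨fun hc => (mem_Zc.1 hk) (hc ▸ hj0), Finset.mem_univ k⟩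
    have hZcard : (Zc a).card ≤ n + 2 := by
      have h := Finset.card_le_card hZsub
      rwa [Finset.card_erase_of_mem (Finset.mem_univ j0), Finset.card_univ,
        Fintype.card_fin] at h
    have hUcard : ((Zc a).image (zrt a b)).card ≤ n + 2 :=
      le_trans Finset.card_image_le hZcard
    have hbound := F0_img_bound' hp (le_refl (F0 p a b))
    refine glue (F0 p a b) (Lset p a b) (amoeba p a b)
      (fun S => ⟨x0 p a b S, vdir a b S, vdir_ne_zero a b S, rfl⟩) ?_ (2 * n + 4) (by omega)
    intro y hy
    obtain ⟨i, hi, r, rfl⟩ := hy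
    exact ⟨ballS p a b i r, ball_mem_F0 hi r, phi_mem_Lset hp hi r⟩
  · push_neg at hz0
    by_cases heq : ∀ j, zrt a b j = zrt a b ⟨0, by omega⟩
    · -- Branch 3 : all roots equal
      refine ⟨1, fun _ => {y | ∃ t : ℝ,
        y = (∑ j, (a j : ℝ) * vv p (a j), ∑ j, (b j : ℝ) * vv p (a j)) + t • ((1 : ℝ), (0 : ℝ))},
        by omega, ?_, ?_⟩
      · intro k
        refine ⟨_, _, ?_, rfl⟩
        intro hc
        have : (1 : ℝ) = 0 := congrArg Prod.fst hc
        norm_num at this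
      · intro y hy
        obtain ⟨i, hi, r, rfl⟩ := hy
        have hconst := phi_const (p := p) hz0 ha hb (i := i) (s := r)
          (fun j => Or.inl ((heq j).trans (heq i).symm))
        refine Set.mem_iUnion.2 ⟨0, ⟨0, ?_⟩⟩
        rw [hconst]
        simp
    · -- Branch 2 : all coefficients nonzero, at least two roots
      push_neg at heq
      obtain ⟨j1, hj1⟩ := heq
      have hUnotin : (Zc a).image (zrt a b) ∉
          ((F0 p a b).erase (Zc a)).image
            (fun S : Finset (Fin (n + 3)) => S.image (zrt a b)) := by
        intro hc
        obtain ⟨S, hSF, hQ⟩ := Finset.mem_image.1 hc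
        have hS0 : S ∈ F0 p a b := Finset.mem_of_mem_erase hSF
        have hSZ : S = Zc a := by
          apply Finset.Subset.antisymm (mem_F0.1 hS0).1
          exact subset_of_img_subset (p := p) (Finset.Subset.refl (Zc a))
            (fun j hj k hk hzz => F0_closed hS0 hj hk hzz) (le_of_eq hQ.symm)
        exact Finset.ne_of_mem_erase hSF hSZ
      have hbound := F0_img_bound hp (Finset.erase_subset _ _) hUnotin
      have hUcard : ((Zc a).image (zrt a b)).card ≤ n + 3 :=
        le_trans Finset.card_image_le (le_trans (Finset.card_le_univ _) (by simp))
      refine glue ((F0 p a b).erase (Zc a)) (Lset p a b) (amoeba p a b)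
        (fun S => ⟨x0 p a b S, vdir a b S, vdir_ne_zero a b S, rfl⟩) ?_ (2 * n + 4) (by omega)
      intro y hy
      obtain ⟨i, hi, r, rfl⟩ := hy
      by_cases hSZ : ballS p a b i r = Zc a
      · have hex : ∃ j2, zrt a b j2 ≠ zrt a b i := by
          by_cases hc : zrt a b i = zrt a b ⟨0, by omega⟩
          · exact ⟨j1, fun h => hj1 (h.trans hc)⟩
          · exact ⟨⟨0, by omega⟩, fun h => hc h.symm⟩
        exact cover_univ_case hp hz0 ha hb hi r hex hSZ
      · exact ⟨ballS p a b i r, Finset.mem_erase.2 ⟨hSZ, ball_mem_F0 hi r⟩,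
          phi_mem_Lset hp hi r⟩
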